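/- Let X be a compact plane set and let F be a nonempty closed subset of X such that no bounded connected component of ℂ \ F is contained in X. Then the algebra of restrictions to F of functions in R(X) is dense in R(F) (with respect to the sup norm on F). -/

import Mathlib

open Metric MeasureTheory Set

noncomputable section

/-- Membership in the uniform algebra `R(X)`: `f` is continuous on `X` and is a uniform
limit on `X` of rational functions with no poles on `X`. -/
def RMem (X : Set ℂ) (f : ℂ → ℂ) : Prop :=
  ContinuousOn f X ∧ ∀ ε : ℝ, 0 < ε → ∃ p q : Polynomial ℂ,
    (∀ z ∈ X, q.eval z ≠ 0) ∧ ∀ z ∈ X, ‖f z - p.eval z / q.eval z‖ < ε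

/-- The ideal `M_x` of functions in `R(X)` vanishing at `x`. -/
def Mideal (X : Set ℂ) (x : ℂ) : Set (ℂ → ℂ) := {f | RMem X f ∧ f x = 0}

/-- The ideal `J_x` of functions in `R(X)` vanishing on a neighbourhood of `x` in `X`. -/
def Jideal (X : Set ℂ) (x : ℂ) : Set (ℂ → ℂ) :=
  {f | RMem X f ∧ ∃ U : Set ℂ, IsOpen U ∧ x ∈ U ∧ ∀ z ∈ X ∩ U, f z = 0}

/-- `x` is a point of continuity for `R(X)`: for every `y ∈ X \ {x}`, `J_y ⊄ M_x`. -/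
def PointOfContinuity (X : Set ℂ) (x : ℂ) : Prop :=
  ∀ y ∈ X, y ≠ x → ¬ (Jideal X y ⊆ Mideal X x)

/-- `x` is an R-point for `R(X)`: for every `y ∈ X \ {x}`, `J_x ⊄ M_y`. -/
def RPoint (X : Set ℂ) (x : ℂ) : Prop :=
  ∀ y ∈ X, y ≠ x → ¬ (Jideal X x ⊆ Mideal X y)

/-- `f` is uniformly approximable on `F` by rational functions with no poles on `X`. -/
def Apx (X F : Set ℂ) (f : ℂ → ℂ) : Prop :=
  ∀ ε : ℝ, 0 < ε → ∃ p q : Polynomial ℂ, (∀ z ∈ X, q.eval z ≠ 0) ∧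
    ∀ z ∈ F, ‖f z - p.eval z / q.eval z‖ < ε

section basic

variable {X F : Set ℂ}

lemma apx_congr {f g : ℂ → ℂ} (hf : Apx X F f) (h : ∀ z ∈ F, f z = g z) : Apx X F g := by
  intro ε hε
  obtain ⟨p, q, hq, he⟩ := hf ε hε
  exact ⟨p, q, hq, fun z hz => (h z hz) ▸ he z hz⟩

lemma apx_rat (p q : Polynomial ℂ) (hq : ∀ z ∈ X, q.eval z ≠ 0) :
    Apx X F (fun z => p.eval z / q.eval z) := by
  intro ε hε
  exact ⟨p, q, hq, fun z _ => by simpa using hε⟩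

lemma apx_poly (p : Polynomial ℂ) : Apx X F (fun z => p.eval z) := by
  have := apx_rat (X := X) (F := F) p 1 (fun z _ => by simp)
  exact apx_congr this (fun z _ => by simp)

lemma apx_limit {f : ℂ → ℂ}
    (h : ∀ ε : ℝ, 0 < ε → ∃ g, Apx X F g ∧ ∀ z ∈ F, ‖f z - g z‖ < ε) :
    Apx X F f := by
  intro ε hε
  obtain ⟨g, hg, hfg⟩ := h (ε/2) (by linarith)
  obtain ⟨p, q, hq, he⟩ := hg (ε/2) (by linarith)
  refine ⟨p, q, hq, fun z hz => ?_⟩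
  calc ‖f z - p.eval z / q.eval z‖
      ≤ ‖f z - g z‖ + ‖g z - p.eval z / q.eval z‖ := by
        simpa using norm_sub_le_norm_sub_add_norm_sub (f z) (g z) (p.eval z / q.eval z)
    _ < ε/2 + ε/2 := add_lt_add (hfg z hz) (he z hz)
    _ = ε := by ring

lemma apx_bound (hFc : IsCompact F) (hFX : F ⊆ X) {f : ℂ → ℂ} (hf : Apx X F f) :
    ∃ M : ℝ, 0 ≤ M ∧ ∀ z ∈ F, ‖f z‖ ≤ M := by
  obtain ⟨p, q, hq, he⟩ := hf 1 one_pos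
  have hcont : ContinuousOn (fun z => p.eval z / q.eval z) F :=
    (p.continuous_aeval.continuousOn).div (q.continuous_aeval.continuousOn)
      (fun z hz => hq z (hFX hz))
  obtain ⟨C, hC⟩ := hFc.exists_bound_of_continuousOn hcont
  refine ⟨max (C + 1) 0, le_max_right _ _, fun z hz => le_trans ?_ (le_max_left _ _)⟩
  calc ‖f z‖ ≤ ‖f z - p.eval z / q.eval z‖
        + ‖p.eval z / q.eval z‖ := by
        simpa using norm_sub_le_norm_sub_add_norm_sub (f z) (p.eval z / q.eval z) 0 |>.trans_eq (by simp)
    _ ≤ 1 + C := by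
        have := (he z hz).le
        have := hC z hz
        linarith [(he z hz).le]
    _ = C + 1 := by ring

lemma apx_add (hFX : F ⊆ X) {f g : ℂ → ℂ} (hf : Apx X F f) (hg : Apx X F g) :
    Apx X F (fun z => f z + g z) := by
  intro ε hε
  obtain ⟨p₁, q₁, hq₁, he₁⟩ := hf (ε/2) (by linarith)
  obtain ⟨p₂, q₂, hq₂, he₂⟩ := hg (ε/2) (by linarith)
  refine ⟨p₁ * q₂ + p₂ * q₁, q₁ * q₂, fun z hz => by
    simp [mul_ne_zero (hq₁ z hz) (hq₂ z hz)], fun z hz => ?_⟩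
  have h1 : q₁.eval z ≠ 0 := hq₁ z (hFX hz)
  have h2 : q₂.eval z ≠ 0 := hq₂ z (hFX hz)
  have hkey : (p₁ * q₂ + p₂ * q₁).eval z / (q₁ * q₂).eval z
      = p₁.eval z / q₁.eval z + p₂.eval z / q₂.eval z := by
    field_simp
    simp only [Polynomial.eval_add, Polynomial.eval_mul]
    ring
  rw [hkey]
  calc ‖f z + g z - (p₁.eval z / q₁.eval z + p₂.eval z / q₂.eval z)‖
      = ‖(f z - p₁.eval z / q₁.eval z) + (g z - p₂.eval z / q₂.eval z)‖ := by
        ring_nf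
    _ ≤ _ + _ := norm_add_le _ _
    _ < ε/2 + ε/2 := add_lt_add (he₁ z hz) (he₂ z hz)
    _ = ε := by ring

lemma apx_mul (hFc : IsCompact F) (hFX : F ⊆ X) {f g : ℂ → ℂ}
    (hf : Apx X F f) (hg : Apx X F g) : Apx X F (fun z => f z * g z) := by
  obtain ⟨Mf, hMf0, hMf⟩ := apx_bound hFc hFX hf
  obtain ⟨Mg, hMg0, hMg⟩ := apx_bound hFc hFX hg
  intro ε hε
  set δ : ℝ := min 1 (ε / (Mf + Mg + 2)) with hδdef
  have hδ0 : 0 < δ := lt_min one_pos (by positivity)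
  obtain ⟨p₁, q₁, hq₁, he₁⟩ := hf δ hδ0
  obtain ⟨p₂, q₂, hq₂, he₂⟩ := hg δ hδ0
  refine ⟨p₁ * p₂, q₁ * q₂, fun z hz => by
    simp [mul_ne_zero (hq₁ z hz) (hq₂ z hz)], fun z hz => ?_⟩
  have h1 : q₁.eval z ≠ 0 := hq₁ z (hFX hz)
  have h2 : q₂.eval z ≠ 0 := hq₂ z (hFX hz)
  set r₁ := p₁.eval z / q₁.eval z
  set r₂ := p₂.eval z / q₂.eval z
  have hkey : (p₁ * p₂).eval z / (q₁ * q₂).eval z = r₁ * r₂ := by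
    simp only [Polynomial.eval_mul, r₁, r₂]
    field_simp
  rw [hkey]
  have hr₂ : ‖r₂‖ ≤ Mg + δ := by
    calc ‖r₂‖ ≤ ‖g z - r₂‖ + ‖g z‖ := by
          have := norm_sub_le_norm_sub_add_norm_sub (g z) r₂ 0
          simp only [sub_zero] at this
          have h := norm_sub_le_norm_sub_add_norm_sub r₂ (g z) 0
          simp only [sub_zero] at h
          calc ‖r₂‖ ≤ ‖r₂ - g z‖ + ‖g z‖ := h
            _ = ‖g z - r₂‖ + ‖g z‖ := by rw [norm_sub_rev]
      _ ≤ δ + Mg := add_le_add (he₂ z hz).le (hMg z hz)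
      _ = Mg + δ := by ring
  have hid : f z * g z - r₁ * r₂ = f z * (g z - r₂) + r₂ * (f z - r₁) := by ring
  calc ‖f z * g z - r₁ * r₂‖
      ≤ ‖f z * (g z - r₂)‖ + ‖r₂ * (f z - r₁)‖ := by
        rw [hid]; exact norm_add_le _ _
    _ = ‖f z‖ * ‖g z - r₂‖
        + ‖r₂‖ * ‖f z - r₁‖ := by simp [map_mul]
    _ ≤ Mf * δ + (Mg + δ) * δ := by
        refine add_le_add (mul_le_mul (hMf z hz) (he₂ z hz).le (by positivity) hMf0) ?_
        exact mul_le_mul hr₂ (he₁ z hz).le (by positivity) (by positivity)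
    _ ≤ Mf * δ + (Mg + 1) * δ := by
        have : δ ≤ 1 := min_le_left _ _
        nlinarith
    _ = (Mf + Mg + 1) * δ := by ring
    _ < ε := by
        have h1 : δ ≤ ε / (Mf + Mg + 2) := min_le_right _ _
        have h2 : (Mf + Mg + 1) * δ ≤ (Mf + Mg + 1) * (ε / (Mf + Mg + 2)) := by nlinarith
        have h3 : (Mf + Mg + 1) * (ε / (Mf + Mg + 2)) < ε := by
          rw [mul_div_assoc']
          rw [div_lt_iff₀ (by positivity)]
          nlinarith
        linarith

end basic
section geom

lemma geom_id (z a b : ℂ) (hza : z ≠ a) (hzb : z ≠ b) (N : ℕ) :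
    (z - a)⁻¹ - ∑ k ∈ Finset.range N, (a - b)^k * ((z - b)⁻¹)^(k+1)
      = ((a - b)/(z - b))^N * (z - a)⁻¹ := by
  have h1 : z - a ≠ 0 := sub_ne_zero.mpr hza
  have h2 : z - b ≠ 0 := sub_ne_zero.mpr hzb
  induction N with
  | zero => simp
  | succ n ih =>
    rw [Finset.sum_range_succ, ← sub_sub, ih, pow_succ]
    have k1 : (z - b)⁻¹ * (z - b) = 1 := inv_mul_cancel₀ h2
    have k2 : (z - a)⁻¹ * (z - a) = 1 := inv_mul_cancel₀ h1
    simp only [div_eq_mul_inv, mul_pow]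
    linear_combination (a - b)^n * ((z - b)⁻¹)^n * (-(z - a)⁻¹ * k1 + (z - b)⁻¹ * k2)

lemma geom_id2 (z b : ℂ) (hzb : z ≠ b) (hb : b ≠ 0) (N : ℕ) :
    (z - b)⁻¹ + ∑ k ∈ Finset.range N, z^k * (b⁻¹)^(k+1)
      = (z/b)^N * (z - b)⁻¹ := by
  have h2 : z - b ≠ 0 := sub_ne_zero.mpr hzb
  induction N with
  | zero => simp
  | succ n ih =>
    rw [Finset.sum_range_succ, ← add_assoc, ih, pow_succ]
    have k1 : b⁻¹ * b = 1 := inv_mul_cancel₀ hb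
    have k3 : (z - b)⁻¹ * (z - b) = 1 := inv_mul_cancel₀ h2
    linear_combination z^n * (b⁻¹)^n * (-(z - b)⁻¹ * k1 - b⁻¹ * k3)

end geom
section transfer

variable {X F : Set ℂ}

lemma apx_inv_transfer (hFc : IsCompact F) (hFX : F ⊆ X) (hFne : F.Nonempty)
    {b : ℂ} (hbF : b ∉ F) (hb : Apx X F (fun z => (z - b)⁻¹))
    {a : ℂ} (hab : dist a b < infDist b F) :
    Apx X F (fun z => (z - a)⁻¹) := by
  set d := infDist b F with hd
  have hd0 : 0 < d := (hFc.isClosed.notMem_iff_infDist_pos hFne).mp hbF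
  have haF : a ∉ F := by
    intro haF
    have : d ≤ dist b a := infDist_le_dist_of_mem haF
    rw [dist_comm] at this
    linarith
  have hzb : ∀ z ∈ F, d ≤ ‖z - b‖ := by
    intro z hz
    have := infDist_le_dist_of_mem (x := b) hz
    rwa [dist_comm, Complex.dist_eq] at this
  set d' := d - dist a b with hd'
  have hd'0 : 0 < d' := by simp only [hd']; linarith
  have hza : ∀ z ∈ F, d' ≤ ‖z - a‖ := by
    intro z hz
    have h1 : ‖z - b‖ ≤ ‖z - a‖ + ‖a - b‖ := by
      simpa using norm_sub_le_norm_sub_add_norm_sub z a b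
    have h2 : ‖a - b‖ = dist a b := (Complex.dist_eq a b).symm
    have := hzb z hz
    simp only [hd']
    linarith
  set r := dist a b / d with hr
  have hr0 : 0 ≤ r := by positivity
  have hr1 : r < 1 := (div_lt_one hd0).mpr hab
  -- partial sums are approximable
  have hS : ∀ N : ℕ, Apx X F (fun z => ∑ k ∈ Finset.range N, (a - b)^k * ((z - b)⁻¹)^(k+1)) := by
    intro N
    induction N with
    | zero => exact apx_congr (apx_poly 0) (by simp)
    | succ n ih =>
      have hpow : Apx X F (fun z => ((z - b)⁻¹)^(n+1)) := by
        clear ih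
        induction n with
        | zero => exact apx_congr hb (by simp)
        | succ m ihm =>
          have := apx_mul hFc hFX ihm hb
          exact apx_congr this (fun z _ => by rw [← pow_succ])
      have hterm : Apx X F (fun z => (a - b)^n * ((z - b)⁻¹)^(n+1)) := by
        have hc : Apx X F (fun z => ((a - b)^n : ℂ)) :=
          apx_congr (apx_poly (Polynomial.C ((a-b)^n))) (fun z _ => by simp)
        exact apx_mul hFc hFX hc hpow
      have := apx_add hFX ih hterm
      exact apx_congr this (fun z _ => by rw [Finset.sum_range_succ])
  refine apx_limit (fun ε hε => ?_)
  -- choose N with r^N / d' < ε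
  obtain ⟨N, hN⟩ := exists_pow_lt_of_lt_one (show (0:ℝ) < ε * d' by positivity) hr1
  refine ⟨_, hS N, fun z hz => ?_⟩
  have hza' : z ≠ a := by rintro rfl; exact haF hz
  have hzb' : z ≠ b := by rintro rfl; exact hbF hz
  rw [geom_id z a b hza' hzb' N]
  rw [norm_mul, norm_pow, norm_div, norm_inv]
  have h1 : ‖a - b‖ / ‖z - b‖ ≤ r := by
    rw [hr]
    have : dist a b = ‖a - b‖ := Complex.dist_eq a b
    rw [this]
    gcongr
    exact hzb z hz
  have h2 : (‖a - b‖ / ‖z - b‖)^N * (‖z - a‖)⁻¹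
      ≤ r^N * d'⁻¹ := by
    have hp : (‖a - b‖ / ‖z - b‖)^N ≤ r^N :=
      pow_le_pow_left₀ (by positivity) h1 N
    have hi : (‖z - a‖)⁻¹ ≤ d'⁻¹ :=
      inv_anti₀ hd'0 (hza z hz)
    exact mul_le_mul hp hi (by positivity) (by positivity)
  have h3 : r^N * d'⁻¹ < ε := by
    rw [← div_eq_mul_inv, div_lt_iff₀ hd'0]
    linarith [hN]
  linarith [h2, h3]

end transfer
section seed

variable {X F : Set ℂ}

lemma apx_inv_far {M : ℝ} (hM0 : 0 ≤ M) (hMF : ∀ z ∈ F, ‖z‖ ≤ M)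
    {b : ℂ} (hb : M < ‖b‖) : Apx X F (fun z => (z - b)⁻¹) := by
  have hb0 : b ≠ 0 := by
    intro h; rw [h] at hb; simp at hb; linarith
  have hbM : 0 < ‖b‖ - M := by linarith
  set r := M / ‖b‖ with hr
  have hr0 : 0 ≤ r := by positivity
  have hr1 : r < 1 := (div_lt_one (by linarith)).mpr hb
  refine apx_limit (fun ε hε => ?_)
  obtain ⟨N, hN⟩ := exists_pow_lt_of_lt_one
    (show (0:ℝ) < ε * (‖b‖ - M) by positivity) hr1
  -- the partial sum is a polynomial
  set P : Polynomial ℂ := -∑ k ∈ Finset.range N, Polynomial.C ((b⁻¹)^(k+1)) * Polynomial.X^k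
    with hP
  refine ⟨fun z => P.eval z, apx_poly P, fun z hz => ?_⟩
  have hPz : P.eval z = -∑ k ∈ Finset.range N, z^k * (b⁻¹)^(k+1) := by
    simp only [hP, Polynomial.eval_neg, Polynomial.eval_finset_sum, Polynomial.eval_mul,
      Polynomial.eval_C, Polynomial.eval_pow, Polynomial.eval_X]
    congr 1
    exact Finset.sum_congr rfl (fun k _ => mul_comm _ _)
  have hzb' : z ≠ b := by
    intro h
    have := hMF z hz
    rw [h] at this
    linarith
  have hid := geom_id2 z b hzb' hb0 N
  have : (z - b)⁻¹ - P.eval z = (z/b)^N * (z - b)⁻¹ := by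
    rw [hPz]
    rw [sub_neg_eq_add]
    exact hid
  rw [this, norm_mul, norm_pow, norm_div, norm_inv]
  have h1 : ‖z‖ / ‖b‖ ≤ r := by
    rw [hr]; gcongr; exact hMF z hz
  have h2 : ‖b‖ - M ≤ ‖z - b‖ := by
    have h3 : ‖b‖ - ‖z‖ ≤ ‖b - z‖ := by
      simpa using norm_sub_norm_le b z
    have h4 : ‖b - z‖ = ‖z - b‖ := norm_sub_rev b z
    have := hMF z hz
    linarith
  have h5 : (‖z‖ / ‖b‖)^N * (‖z - b‖)⁻¹
      ≤ r^N * (‖b‖ - M)⁻¹ := by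
    have hp : (‖z‖ / ‖b‖)^N ≤ r^N := pow_le_pow_left₀ (by positivity) h1 N
    have hi : (‖z - b‖)⁻¹ ≤ (‖b‖ - M)⁻¹ := inv_anti₀ hbM h2
    exact mul_le_mul hp hi (by positivity) (by positivity)
  have h6 : r^N * (‖b‖ - M)⁻¹ < ε := by
    rw [← div_eq_mul_inv, div_lt_iff₀ hbM]
    linarith [hN]
  linarith

lemma apx_inv_notX {w : ℂ} (hw : w ∉ X) : Apx X F (fun z => (z - w)⁻¹) := by
  have := apx_rat (X := X) (F := F) 1 (Polynomial.X - Polynomial.C w)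
    (fun z hz => by
      simp only [Polynomial.eval_sub, Polynomial.eval_X, Polynomial.eval_C, sub_ne_zero]
      rintro rfl; exact hw hz)
  exact apx_congr this (fun z _ => by simp [one_div])

end seed
section component

lemma apx_inv_all (X F : Set ℂ) (hXc : IsCompact X) (hFX : F ⊆ X) (hFcl : IsClosed F)
    (hFne : F.Nonempty)
    (hcomp : ∀ z ∈ Fᶜ, Bornology.IsBounded (connectedComponentIn Fᶜ z) →
      ¬ connectedComponentIn Fᶜ z ⊆ X) :
    ∀ a ∉ F, Apx X F (fun z => (z - a)⁻¹) := by
  have hFc : IsCompact F := hXc.of_isClosed_subset hFcl hFX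
  set T : Set ℂ := {b | b ∉ F ∧ Apx X F (fun z => (z - b)⁻¹)} with hT
  have hdpos : ∀ b ∉ F, 0 < infDist b F :=
    fun b hb => (hFcl.notMem_iff_infDist_pos hFne).mp hb
  have hTopen : IsOpen T := by
    rw [Metric.isOpen_iff]
    rintro b ⟨hbF, hbA⟩
    refine ⟨infDist b F, hdpos b hbF, fun a ha => ?_⟩
    rw [mem_ball] at ha
    have haF : a ∉ F := fun haF => absurd (infDist_le_dist_of_mem haF) (by
      rw [dist_comm] at ha; linarith)
    exact ⟨haF, apx_inv_transfer hFc hFX hFne hbF hbA ha⟩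
  set V : Set ℂ := Fᶜ \ T with hV
  have hVopen : IsOpen V := by
    rw [Metric.isOpen_iff]
    rintro b ⟨hbF, hbT⟩
    rw [mem_compl_iff] at hbF
    refine ⟨infDist b F / 2, by linarith [hdpos b hbF], fun a ha => ?_⟩
    rw [mem_ball] at ha
    have haF : a ∉ F := fun haF => absurd (infDist_le_dist_of_mem haF) (by
      rw [dist_comm] at ha; linarith [hdpos b hbF])
    refine ⟨haF, fun haT => hbT ?_⟩
    have hle : infDist b F ≤ infDist a F + dist b a := infDist_le_infDist_add_dist
    have hba : dist b a < infDist a F := by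
      rw [dist_comm] at hle ⊢
      linarith
    exact ⟨hbF, apx_inv_transfer hFc hFX hFne haT.1 haT.2 hba⟩
  intro a haF
  set C : Set ℂ := connectedComponentIn Fᶜ a with hC
  have hCsub : C ⊆ Fᶜ := connectedComponentIn_subset Fᶜ a
  have hCpre : IsPreconnected C := (isPreconnected_connectedComponentIn)
  have hCuv : C ⊆ T ∪ V := by
    intro z hz
    by_cases hzT : z ∈ T
    · exact Or.inl hzT
    · exact Or.inr ⟨hCsub hz, hzT⟩
  have hdisj : Disjoint T V := Set.disjoint_sdiff_right
  -- a seed in C ∩ T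
  have hseed : ∃ w ∈ C, w ∈ T := by
    by_cases hbdd : Bornology.IsBounded C
    · obtain ⟨w, hwC, hwX⟩ := not_subset.mp (hcomp a haF hbdd)
      exact ⟨w, hwC, hCsub hwC, apx_inv_notX hwX⟩
    · obtain ⟨M, hM⟩ := isBounded_iff_forall_norm_le.mp hFc.isBounded
      rw [isBounded_iff_forall_norm_le] at hbdd
      push_neg at hbdd
      obtain ⟨w, hwC, hw⟩ := hbdd (max M 0)
      refine ⟨w, hwC, hCsub hwC, apx_inv_far (M := max M 0) (le_max_right _ _)
        (fun z hz => le_trans (hM z hz) (le_max_left _ _)) ?_⟩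
      exact hw
  obtain ⟨w, hwC, hwT⟩ := hseed
  rcases hCpre.subset_or_subset hTopen hVopen hdisj hCuv with hsub | hsub
  · have haC : a ∈ C := mem_connectedComponentIn haF
    exact (hsub haC).2
  · exact absurd hwT (fun h => (hsub hwC).2 h)

end component
section rational

variable {X F : Set ℂ}

lemma apx_inv_prod (hFc : IsCompact F) (hFX : F ⊆ X) (m : Multiset ℂ)
    (hm : ∀ r ∈ m, Apx X F (fun z => (z - r)⁻¹)) :
    Apx X F (fun z => ((m.map (fun r => z - r)).prod)⁻¹) := by
  induction m using Multiset.induction_on with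
  | empty => exact apx_congr (apx_poly 1) (fun z _ => by simp)
  | cons r m ih =>
    have h1 : Apx X F (fun z => (z - r)⁻¹) := hm r (Multiset.mem_cons_self r m)
    have h2 := ih (fun s hs => hm s (Multiset.mem_cons_of_mem hs))
    have := apx_mul hFc hFX h1 h2
    refine apx_congr this (fun z _ => ?_)
    simp only [Multiset.map_cons, Multiset.prod_cons, mul_inv]

lemma apx_div (hFc : IsCompact F) (hFX : F ⊆ X) (hFne : F.Nonempty)
    (hinvF : ∀ r ∉ F, Apx X F (fun z => (z - r)⁻¹))
    (p q : Polynomial ℂ) (hq : ∀ z ∈ F, q.eval z ≠ 0) :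
    Apx X F (fun z => p.eval z / q.eval z) := by
  obtain ⟨z₀, hz₀⟩ := hFne
  have hq0 : q ≠ 0 := fun h => hq z₀ hz₀ (by simp [h])
  have hsplit := (IsAlgClosed.splits q).eq_prod_roots
  set m := q.roots with hm
  have hroot : ∀ r ∈ m, r ∉ F := by
    intro r hr hrF
    exact hq r hrF (Polynomial.isRoot_of_mem_roots hr)
  have heval : ∀ z : ℂ, q.eval z = q.leadingCoeff * (m.map (fun r => z - r)).prod := by
    intro z
    conv_lhs => rw [hsplit]
    rw [Polynomial.eval_mul, Polynomial.eval_C, Polynomial.eval_multiset_prod,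
      Multiset.map_map]
    simp [Function.comp]
  have hA : Apx X F (fun z => ((m.map (fun r => z - r)).prod)⁻¹) :=
    apx_inv_prod hFc hFX m (fun r hr => hinvF r (hroot r hr))
  have hc : Apx X F (fun z => (q.leadingCoeff⁻¹ : ℂ)) :=
    apx_congr (apx_poly (Polynomial.C q.leadingCoeff⁻¹)) (fun z _ => by simp)
  have := apx_mul hFc hFX (apx_poly p) (apx_mul hFc hFX hc hA)
  refine apx_congr this (fun z hz => ?_)
  rw [heval z, div_eq_mul_inv, mul_inv]

end rational

/-- (Consequence of Runge's theorem, used in Lemma 4.1 of the paper.)  If `F` is a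
nonempty closed subset of a compact plane set `X` such that no bounded component of
`ℂ \ F` is contained in `X`, then the restrictions to `F` of functions in `R(X)` are
uniformly dense in `R(F)`. -/
theorem restrictions_dense (X : Set ℂ) (hXc : IsCompact X) (hXne : X.Nonempty)
    (F : Set ℂ) (hFX : F ⊆ X) (hFcl : IsClosed F) (hFne : F.Nonempty)
    (hcomp : ∀ z ∈ Fᶜ, Bornology.IsBounded (connectedComponentIn Fᶜ z) →
      ¬ connectedComponentIn Fᶜ z ⊆ X) :
    ∀ g : ℂ → ℂ, RMem F g → ∀ ε : ℝ, 0 < ε →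
      ∃ f : ℂ → ℂ, RMem X f ∧ ∀ z ∈ F, ‖g z - f z‖ < ε := by
  intro g hg ε hε
  have hFc : IsCompact F := hXc.of_isClosed_subset hFcl hFX
  obtain ⟨p, q, hq, he⟩ := hg.2 (ε/2) (by linarith)
  have hdiv : Apx X F (fun z => p.eval z / q.eval z) :=
    apx_div hFc hFX hFne (fun r hr => apx_inv_all X F hXc hFX hFcl hFne hcomp r hr) p q hq
  obtain ⟨P, Q, hQ, hE⟩ := hdiv (ε/2) (by linarith)
  refine ⟨fun z => P.eval z / Q.eval z, ⟨?_, fun ε' hε' => ⟨P, Q, hQ, fun z hz => by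
    simpa using hε'⟩⟩, fun z hz => ?_⟩
  · exact (P.continuous_aeval.continuousOn).div (Q.continuous_aeval.continuousOn)
      (fun z hz => hQ z hz)
  · calc ‖g z - P.eval z / Q.eval z‖
        ≤ ‖g z - p.eval z / q.eval z‖
          + ‖p.eval z / q.eval z - P.eval z / Q.eval z‖ := by
          simpa using norm_sub_le_norm_sub_add_norm_sub (g z) (p.eval z / q.eval z) (P.eval z / Q.eval z)
      _ < ε/2 + ε/2 := add_lt_add (he z hz) (hE z hz)
      _ = ε := by ring

end
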